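/- Let M be a geodesic pointed metric space covered by closed sets (P_n)_{n∈ℕ} with points p_n ∈ P_n, p_1 = 0_M, and suppose: (a) there are uniformly Lipschitz functions φ_n : M → [0,1] with Lipschitz constant L, φ_n(p_k) = δ_{kn}, and Σ_n φ_n = 1; (b) for each n, φ_k restricted to P_n is nonzero for at most N indices k, all satisfying d(p_k, p_n) ≤ D. Then for every Lipschitz f : {p_n : n ∈ ℕ} → ℝ with f(p_1) = 0, the function E f := Σ_n f(p_n) φ_n is a Lipschitz extension of f to M with Lip(E f) ≤ D·L·N·Lip(f). -/

import Mathlib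

open NNReal

lemma dini_aux {g : ℝ → ℝ} {a b C : ℝ} (hC : 0 ≤ C) (hab : a ≤ b)
    (hg : ContinuousOn g (Set.Icc a b)) (e : ℕ → ℝ)
    (hgood : ∀ u, a ≤ u → u < b → u ∉ Set.range e →
      ∃ z, u < z ∧ z ≤ b ∧ g z - g u ≤ C * (z - u)) :
    g b - g a ≤ C * (b - a) := by
  have key : ∀ ε : ℝ, 0 < ε → g b - g a ≤ C * (b - a) + ε * (b - a + 2) := by
    intro ε hε
    set w : ℝ → ℕ → ℝ := fun u i => if e i < u then (1/2:ℝ)^i else 0 with hwdef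
    have hw0 : ∀ u i, 0 ≤ w u i := by
      intro u i; simp only [hwdef]; split <;> positivity
    have hwle : ∀ u i, w u i ≤ (1/2:ℝ)^i := by
      intro u i; simp only [hwdef]; split
      · exact le_refl _
      · positivity
    have hgeom : Summable (fun i : ℕ => (1/2:ℝ)^i) := summable_geometric_two
    have hwsum : ∀ u, Summable (w u) := fun u =>
      Summable.of_nonneg_of_le (hw0 u) (hwle u) hgeom
    set s : ℝ → ℝ := fun u => ∑' i, w u i with hsdef
    have hwmono : ∀ {u v : ℝ}, u ≤ v → ∀ i, w u i ≤ w v i := by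
      intro u v huv i
      by_cases h : e i < u
      · simp only [hwdef, if_pos h, if_pos (lt_of_lt_of_le h huv)]
        exact le_rfl
      · simp only [hwdef, if_neg h]
        exact hw0 v i
    have hsmono : ∀ {u v : ℝ}, u ≤ v → s u ≤ s v := fun {u v} huv =>
      Summable.tsum_le_tsum (hwmono huv) (hwsum u) (hwsum v)
    have hs0 : ∀ u, 0 ≤ s u := fun u => tsum_nonneg (hw0 u)
    have hs2 : ∀ u, s u ≤ 2 := by
      intro u
      have h := Summable.tsum_le_tsum (hwle u) (hwsum u) hgeom
      rwa [tsum_geometric_two] at h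
    set A : Set ℝ := {u | u ∈ Set.Icc a b ∧
      g u - g a ≤ C * (u - a) + ε * (u - a) + ε * s u} with hA
    have haA : a ∈ A := by
      refine ⟨⟨le_refl a, hab⟩, ?_⟩
      have h := mul_nonneg hε.le (hs0 a)
      nlinarith
    have hbdd : BddAbove A := ⟨b, fun u hu => hu.1.2⟩
    set T := sSup A with hT
    have hlub : IsLUB A T := isLUB_csSup ⟨a, haA⟩ hbdd
    have haT : a ≤ T := hlub.1 haA
    have hTb : T ≤ b := hlub.2 fun u hu => hu.1.2
    have hTIcc : T ∈ Set.Icc a b := ⟨haT, hTb⟩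
    have hTA : T ∈ A := by
      refine ⟨hTIcc, ?_⟩
      have hne : (nhdsWithin T A).NeBot :=
        mem_closure_iff_nhdsWithin_neBot.mp (hlub.mem_closure ⟨a, haA⟩)
      have htd : Filter.Tendsto (fun u => g u - g a) (nhdsWithin T A)
          (nhds (g T - g a)) :=
        (((hg T hTIcc).mono fun u hu => hu.1).sub tendsto_const_nhds)
      refine le_of_tendsto htd ?_
      refine eventually_nhdsWithin_of_forall ?_
      intro u hu
      have huT : u ≤ T := hlub.1 hu
      have h1 : C * (u - a) ≤ C * (T - a) := by nlinarith
      have h2 : ε * (u - a) ≤ ε * (T - a) := by nlinarith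
      have h3 : ε * s u ≤ ε * s T := mul_le_mul_of_nonneg_left (hsmono huT) hε.le
      have := hu.2
      linarith
    have hTeqb : T = b := by
      by_contra hne
      have hTlt : T < b := lt_of_le_of_ne hTb hne
      have hzex : ∃ z, T < z ∧ z ≤ b ∧
          g z - g a ≤ C * (z - a) + ε * (z - a) + ε * s z := by
        by_cases hr : T ∈ Set.range e
        · obtain ⟨i, hi⟩ := hr
          have hct : ContinuousWithinAt g (Set.Icc a b) T := hg T hTIcc
          have hpos : 0 < ε * (1/2:ℝ)^i := by positivity
          obtain ⟨δ, hδpos, hδ⟩ := Metric.continuousWithinAt_iff.mp hct (ε*(1/2)^i) hpos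
          set z := min (T + δ/2) ((T + b)/2) with hzdef
          have hz1 : T < z := lt_min (by linarith) (by linarith)
          have hz2 : z < b := lt_of_le_of_lt (min_le_right _ _) (by linarith)
          have hzI : z ∈ Set.Icc a b := ⟨haT.trans hz1.le, hz2.le⟩
          have hdz : dist z T < δ := by
            rw [Real.dist_eq, abs_of_pos (by linarith : (0:ℝ) < z - T)]
            have hzle : z ≤ T + δ/2 := min_le_left _ _
            linarith
          have hgz := hδ hzI hdz
          rw [Real.dist_eq] at hgz
          have hsz : s T + (1/2:ℝ)^i ≤ s z := by
            have hised : Summable (fun j : ℕ => if j = i then (1/2:ℝ)^i else 0) := by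
              apply summable_of_ne_finset_zero (s := {i})
              intro j hj
              rw [if_neg (by simpa using hj)]
            have hiteq : (∑' j : ℕ, if j = i then (1/2:ℝ)^i else 0) = (1/2:ℝ)^i :=
              tsum_ite_eq i (fun _ => (1/2:ℝ)^i)
            have hcalc : s T + (1/2:ℝ)^i
                = ∑' j, (w T j + if j = i then (1/2:ℝ)^i else 0) := by
              rw [Summable.tsum_add (hwsum T) hised, hiteq]
            rw [hcalc]
            apply Summable.tsum_le_tsum _ ((hwsum T).add hised) (hwsum z)
            intro j
            by_cases hj : j = i
            · subst hj
              have h1 : ¬ e j < T := by rw [hi]; exact lt_irrefl T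
              have h2 : e j < z := by rw [hi]; exact hz1
              simp [hwdef, h1, h2]
            · rw [if_neg hj, add_zero]
              exact hwmono hz1.le j
          refine ⟨z, hz1, hz2.le, ?_⟩
          have hTA2 := hTA.2
          have hgzT : g z - g T ≤ ε * (1/2:ℝ)^i := (le_abs_self _).trans hgz.le
          have hm1 : C * (T - a) ≤ C * (z - a) := by nlinarith
          have hm2 : ε * (T - a) ≤ ε * (z - a) := by nlinarith
          have hm3 : ε * (1/2:ℝ)^i + ε * s T ≤ ε * s z := by nlinarith
          linarith
        · obtain ⟨z, hz1, hz2, hz3⟩ := hgood T haT hTlt hr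
          refine ⟨z, hz1, hz2, ?_⟩
          have hTA2 := hTA.2
          have hm1 : C * (T - a) ≤ C * (z - a) := by nlinarith
          have hm2 : ε * (T - a) ≤ ε * (z - a) := by nlinarith
          have hm3 : ε * s T ≤ ε * s z := mul_le_mul_of_nonneg_left (hsmono hz1.le) hε.le
          linarith
      obtain ⟨z, hz1, hz2, hz3⟩ := hzex
      have hzA : z ∈ A := ⟨⟨haT.trans hz1.le, hz2⟩, hz3⟩
      exact absurd (hlub.1 hzA) (not_le.mpr hz1)
    have hfinal := hTA.2
    rw [hTeqb] at hfinal
    have h2 := hs2 b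
    nlinarith
  by_contra hcon
  push_neg at hcon
  have hpos : (0:ℝ) < b - a + 2 := by linarith
  have hη : 0 < (g b - g a - C*(b-a)) / (2 * (b - a + 2)) :=
    div_pos (by linarith) (by linarith)
  have hk := key _ hη
  have hmul : (g b - g a - C*(b-a)) / (2 * (b - a + 2)) * (b - a + 2)
      = (g b - g a - C*(b-a)) / 2 := by field_simp
  linarith

/-- extension operator from a net.  Given a geodesic pointed metric space
covered by closed tiles `P n` with centres `p n` (`p 0` the base point), a Lipschitz partition
of unity `φ_n` with `φ_n(p_k) = δ_{kn}` such that on each tile at most `N` of the `φ_k` are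
nonzero, all with `dist(p_k, p_n) ≤ D`, the operator `E f = Σ_n f(p_n) φ_n` extends any
Lipschitz function `f` on the net vanishing at the base point, with
`Lip(E f) ≤ D·L·N·Lip(f)`. -/
theorem stmt10 {M : Type*} [MetricSpace M] (base : M)
    (hgeo : ∀ x y : M, ∃ γ : ℝ → M, γ 0 = x ∧ γ (dist x y) = y ∧
      ∀ s ∈ Set.Icc (0 : ℝ) (dist x y), ∀ t ∈ Set.Icc (0 : ℝ) (dist x y),
        dist (γ s) (γ t) = |s - t|)
    (P : ℕ → Set M) (hclosed : ∀ n, IsClosed (P n)) (hcover : ∀ x : M, ∃ n, x ∈ P n)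
    (p : ℕ → M) (hp : ∀ n, p n ∈ P n) (hp0 : p 0 = base)
    (φ : ℕ → M → ℝ) (L : ℝ≥0)
    (hφrange : ∀ n x, φ n x ∈ Set.Icc (0 : ℝ) 1)
    (hφlip : ∀ n, LipschitzWith L (φ n))
    (hφδ : ∀ n k, φ n (p k) = if k = n then (1 : ℝ) else 0)
    (hφsum : ∀ x : M, ∑' n, φ n x = 1)
    (N : ℕ) (D : ℝ≥0)
    (hfin : ∀ n, {k : ℕ | ∃ x ∈ P n, φ k x ≠ 0}.Finite ∧
      Nat.card {k : ℕ | ∃ x ∈ P n, φ k x ≠ 0} ≤ N ∧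
      ∀ k ∈ {k : ℕ | ∃ x ∈ P n, φ k x ≠ 0}, dist (p k) (p n) ≤ D)
    (f : M → ℝ) (Kf : ℝ≥0)
    (hf : LipschitzOnWith Kf f (Set.range p)) (hf0 : f base = 0) :
    (∀ k, (∑' n, f (p n) * φ n (p k)) = f (p k)) ∧
    LipschitzWith (D * L * N * Kf) (fun x => ∑' n, f (p n) * φ n x) := by
  classical
  constructor
  · intro k
    rw [tsum_eq_single k (fun n hn => by
      rw [hφδ n k, if_neg (fun h => hn h.symm), mul_zero])]
    rw [hφδ k k, if_pos rfl, mul_one]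
  -- notation
  set E : M → ℝ := fun x => ∑' n, f (p n) * φ n x with hEdef
  set S : ℕ → Finset ℕ := fun n => (hfin n).1.toFinset with hSdef
  have hmemS : ∀ {n k : ℕ}, k ∈ S n ↔ ∃ x ∈ P n, φ k x ≠ 0 := by
    intro n k
    simp only [hSdef, Set.Finite.mem_toFinset, Set.mem_setOf_eq]
  have hφz : ∀ {n k : ℕ} {x : M}, x ∈ P n → k ∉ S n → φ k x = 0 := by
    intro n k x hx hk
    by_contra h
    exact hk (hmemS.mpr ⟨x, hx, h⟩)
  have hcardS : ∀ n, ((S n).card : ℝ) ≤ (N : ℝ) := by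
    intro n
    have h1 := (hfin n).2.1
    rw [Nat.card_coe_set_eq, Set.ncard_eq_toFinset_card _ (hfin n).1] at h1
    exact_mod_cast h1
  have hdist_f : ∀ k n, k ∈ S n → |f (p k) - f (p n)| ≤ (Kf : ℝ) * D := by
    intro k n hk
    have h1 := lipschitzOnWith_iff_dist_le_mul.mp hf (p k) ⟨k, rfl⟩ (p n) ⟨n, rfl⟩
    rw [Real.dist_eq] at h1
    have h2 : dist (p k) (p n) ≤ (D : ℝ) := (hfin n).2.2 k (hmemS.mp hk)
    calc |f (p k) - f (p n)| ≤ (Kf : ℝ) * dist (p k) (p n) := h1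
      _ ≤ (Kf : ℝ) * D := by
          exact mul_le_mul_of_nonneg_left h2 Kf.coe_nonneg
  have hφd : ∀ (k : ℕ) (u v : M), |φ k u - φ k v| ≤ (L : ℝ) * dist u v := by
    intro k u v
    have := (hφlip k).dist_le_mul u v
    rwa [Real.dist_eq] at this
  have hEsum : ∀ {x : M} {n : ℕ}, x ∈ P n → ∀ {s : Finset ℕ}, S n ⊆ s →
      E x = ∑ k ∈ s, f (p k) * φ k x := by
    intro x n hx s hs
    simp only [hEdef]
    exact tsum_eq_sum fun k hk => by rw [hφz hx (fun h => hk (hs h)), mul_zero]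
  have hone : ∀ {x : M} {n : ℕ}, x ∈ P n → ∀ {s : Finset ℕ}, S n ⊆ s →
      ∑ k ∈ s, φ k x = 1 := by
    intro x n hx s hs
    have h := hφsum x
    rwa [tsum_eq_sum (s := s) (fun k hk => hφz hx (fun h' => hk (hs h')))] at h
  have keyEst : ∀ (u v : M) (n m : ℕ), u ∈ P n → v ∈ P m → ∀ (c R : ℝ), 0 ≤ R →
      (∀ k ∈ S n ∪ S m, |f (p k) - c| ≤ R) →
      |E u - E v| ≤ ((S n ∪ S m).card : ℝ) * (R * ((L : ℝ) * dist u v)) := by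
    intro u v n m hu hv c R hR hbd
    have h1 : E u = ∑ k ∈ S n ∪ S m, f (p k) * φ k u :=
      hEsum hu Finset.subset_union_left
    have h2 : E v = ∑ k ∈ S n ∪ S m, f (p k) * φ k v :=
      hEsum hv Finset.subset_union_right
    have h3 : ∑ k ∈ S n ∪ S m, φ k u = 1 := hone hu Finset.subset_union_left
    have h4 : ∑ k ∈ S n ∪ S m, φ k v = 1 := hone hv Finset.subset_union_right
    have h5 : E u - E v = ∑ k ∈ S n ∪ S m, (f (p k) - c) * (φ k u - φ k v) := by
      have expand : ∑ k ∈ S n ∪ S m, (f (p k) - c) * (φ k u - φ k v)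
          = (∑ k ∈ S n ∪ S m, (f (p k) * φ k u - f (p k) * φ k v))
            - (c * (∑ k ∈ S n ∪ S m, φ k u) - c * (∑ k ∈ S n ∪ S m, φ k v)) := by
        rw [Finset.mul_sum, Finset.mul_sum, ← Finset.sum_sub_distrib,
          ← Finset.sum_sub_distrib]
        exact Finset.sum_congr rfl fun k _ => by ring
      rw [h1, h2, expand, h3, h4, Finset.sum_sub_distrib]
      ring
    rw [h5]
    calc |∑ k ∈ S n ∪ S m, (f (p k) - c) * (φ k u - φ k v)|
        ≤ ∑ k ∈ S n ∪ S m, |(f (p k) - c) * (φ k u - φ k v)| :=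
          Finset.abs_sum_le_sum_abs _ _
      _ ≤ ∑ _k ∈ S n ∪ S m, R * ((L : ℝ) * dist u v) := by
          apply Finset.sum_le_sum
          intro k hk
          rw [abs_mul]
          exact mul_le_mul (hbd k hk) (hφd k u v) (abs_nonneg _) hR
      _ = ((S n ∪ S m).card : ℝ) * (R * ((L : ℝ) * dist u v)) := by
          rw [Finset.sum_const, nsmul_eq_mul]
  -- tile-wise Lipschitz bound with the sharp constant
  have tile : ∀ (n : ℕ) (u v : M), u ∈ P n → v ∈ P n →
      |E u - E v| ≤ ((D : ℝ) * L * N * Kf) * dist u v := by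
    intro n u v hu hv
    have hbd : ∀ k ∈ S n ∪ S n, |f (p k) - f (p n)| ≤ (Kf : ℝ) * D := by
      intro k hk
      rw [Finset.union_self] at hk
      exact hdist_f k n hk
    have h := keyEst u v n n hu hv (f (p n)) ((Kf : ℝ) * D) (by positivity) hbd
    rw [Finset.union_self] at h
    refine h.trans ?_
    have hc := hcardS n
    have hnn : (0:ℝ) ≤ (Kf : ℝ) * D * ((L:ℝ) * dist u v) := by positivity
    calc ((S n).card : ℝ) * ((Kf:ℝ) * D * ((L:ℝ) * dist u v))
        ≤ (N : ℝ) * ((Kf:ℝ) * D * ((L:ℝ) * dist u v)) :=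
          mul_le_mul_of_nonneg_right hc hnn
      _ = ((D : ℝ) * L * N * Kf) * dist u v := by ring
  -- a crude local Lipschitz estimate, giving continuity of E
  have locLip : ∀ z : M, ∃ δ > 0, ∀ w : M, dist w z < δ →
      |E w - E z| ≤ (2*(N:ℝ)*(3*(Kf:ℝ)*D)*(L:ℝ)) * dist w z := by
    intro z
    obtain ⟨n, hz⟩ := hcover z
    have hσcont : Continuous (fun x : M => ∑ k ∈ S n, φ k x) :=
      continuous_finset_sum _ fun k _ => (hφlip k).continuous
    have hσz : (∑ k ∈ S n, φ k z) = 1 := hone hz (subset_refl _)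
    have h01 : (0:ℝ) < ∑ k ∈ S n, φ k z := by rw [hσz]; norm_num
    have hev : ∀ᶠ x in nhds z, 0 < ∑ k ∈ S n, φ k x :=
      (hσcont.continuousAt).eventually (eventually_gt_nhds h01)
    rw [Metric.eventually_nhds_iff] at hev
    obtain ⟨δ, hδ, hball⟩ := hev
    refine ⟨δ, hδ, ?_⟩
    intro w hw
    have hσw : 0 < ∑ k ∈ S n, φ k w := hball hw
    obtain ⟨m, hwm⟩ := hcover w
    have hex : ∃ k ∈ S n, φ k w ≠ 0 := by
      by_contra h
      push_neg at h
      rw [Finset.sum_eq_zero h] at hσw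
      exact lt_irrefl _ hσw
    obtain ⟨k₀, hk₀n, hk₀w⟩ := hex
    have hk₀m : k₀ ∈ S m := hmemS.mpr ⟨w, hwm, hk₀w⟩
    have hbd : ∀ k ∈ S m ∪ S n, |f (p k) - f (p n)| ≤ 3*(Kf:ℝ)*D := by
      intro k hk
      have hKD : (0:ℝ) ≤ (Kf:ℝ) * D := by positivity
      rcases Finset.mem_union.mp hk with h | h
      · have h2 := hdist_f k m h
        have h3 := hdist_f k₀ m hk₀m
        have h4 := hdist_f k₀ n hk₀n
        have t1 : |f (p k) - f (p n)| ≤ |f (p k) - f (p m)| + |f (p m) - f (p n)| :=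
          abs_sub_le _ _ _
        have t2 : |f (p m) - f (p n)| ≤ |f (p m) - f (p k₀)| + |f (p k₀) - f (p n)| :=
          abs_sub_le _ _ _
        have t3 : |f (p m) - f (p k₀)| = |f (p k₀) - f (p m)| := abs_sub_comm _ _
        linarith
      · have h2 := hdist_f k n h
        linarith
    have h := keyEst w z m n hwm hz (f (p n)) (3*(Kf:ℝ)*D) (by positivity) hbd
    refine h.trans ?_
    have hcard : (((S m ∪ S n).card : ℕ) : ℝ) ≤ 2*(N:ℝ) := by
      have h1 := Finset.card_union_le (S m) (S n)
      have h2 := hcardS m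
      have h3 := hcardS n
      have : (((S m ∪ S n).card : ℕ) : ℝ) ≤ ((S m).card : ℝ) + ((S n).card : ℝ) := by
        exact_mod_cast h1
      linarith
    have hnn : (0:ℝ) ≤ 3*(Kf:ℝ)*D * ((L:ℝ) * dist w z) := by positivity
    calc (((S m ∪ S n).card : ℕ) : ℝ) * (3*(Kf:ℝ)*D * ((L:ℝ) * dist w z))
        ≤ 2*(N:ℝ) * (3*(Kf:ℝ)*D * ((L:ℝ) * dist w z)) :=
          mul_le_mul_of_nonneg_right hcard hnn
      _ = (2*(N:ℝ)*(3*(Kf:ℝ)*D)*(L:ℝ)) * dist w z := by ring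
  have hEcont : Continuous E := by
    rw [Metric.continuous_iff]
    intro z ε hε
    obtain ⟨δ, hδ, hloc⟩ := locLip z
    set K : ℝ := 2*(N:ℝ)*(3*(Kf:ℝ)*D)*(L:ℝ) with hKdef
    have hK0 : 0 ≤ K := by positivity
    refine ⟨min δ (ε/(K+1)), by positivity, ?_⟩
    intro w hw
    have h1 : dist w z < δ := lt_of_lt_of_le hw (min_le_left _ _)
    have h2 : dist w z < ε/(K+1) := lt_of_lt_of_le hw (min_le_right _ _)
    have h3 := hloc w h1
    rw [Real.dist_eq]
    have h4 : K * dist w z ≤ K * (ε/(K+1)) :=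
      mul_le_mul_of_nonneg_left h2.le hK0
    have h5 : K * (ε/(K+1)) < ε := by
      rw [mul_div_assoc']
      rw [div_lt_iff₀ (by linarith : (0:ℝ) < K+1)]
      nlinarith
    calc |E w - E z| ≤ K * dist w z := h3
      _ ≤ K * (ε/(K+1)) := h4
      _ < ε := h5
  -- now the global Lipschitz bound via geodesics
  apply LipschitzWith.of_dist_le_mul
  intro x y
  obtain ⟨γ, hγ0, hγd, hγiso⟩ := hgeo x y
  set d : ℝ := dist x y with hddef
  have hd0 : (0:ℝ) ≤ d := dist_nonneg
  set C : ℝ := (D : ℝ) * L * N * Kf with hCdef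
  have hC0 : 0 ≤ C := by positivity
  set g : ℝ → ℝ := fun t => E (γ t) with hgdef
  have hγcont : ContinuousOn γ (Set.Icc 0 d) := by
    apply LipschitzOnWith.continuousOn (K := 1)
    rw [lipschitzOnWith_iff_dist_le_mul]
    intro s hs t ht
    rw [hγiso s hs t ht, ← Real.dist_eq]
    simp
  have hgCont : ContinuousOn g (Set.Icc 0 d) := hEcont.comp_continuousOn hγcont
  set B : ℕ → Set ℝ := fun n =>
    {u | γ u ∈ P n ∧ u < d ∧ ∀ z, u < z → z ≤ d → γ z ∉ P n} with hBdef
  have hBsub : ∀ n, (B n).Subsingleton := by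
    intro n u hu v hv
    by_contra hne
    rcases lt_or_gt_of_ne hne with h | h
    · exact (hu.2.2 v h hv.2.1.le) hv.1
    · exact (hv.2.2 u h hu.2.1.le) hu.1
  have hBcnt : (⋃ n, B n).Countable :=
    Set.countable_iUnion fun n => (hBsub n).countable
  obtain ⟨e, he⟩ := (hBcnt.insert 0).exists_eq_range (Set.insert_nonempty _ _)
  have hslope : ∀ u, 0 ≤ u → u < d → u ∉ Set.range e →
      ∃ z, u < z ∧ z ≤ d ∧ |g z - g u| ≤ C * (z - u) := by
    intro u h0 h1 hnr
    obtain ⟨n, hn⟩ := hcover (γ u)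
    have hnB : u ∉ B n := by
      intro hmem
      exact hnr (he ▸ Set.mem_insert_iff.mpr (Or.inr (Set.mem_iUnion.mpr ⟨n, hmem⟩)))
    have hC' : ¬ ∀ z, u < z → z ≤ d → γ z ∉ P n := fun hcc => hnB ⟨hn, h1, hcc⟩
    push_neg at hC'
    obtain ⟨z, hz1, hz2, hz3⟩ := hC'
    refine ⟨z, hz1, hz2, ?_⟩
    have hiso := hγiso z ⟨h0.trans hz1.le, hz2⟩ u ⟨h0, h1.le⟩
    have ht := tile n (γ z) (γ u) hz3 hn
    rw [hiso, abs_of_pos (sub_pos.mpr hz1)] at ht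
    exact ht
  have hge : g d - g 0 ≤ C * (d - 0) := by
    apply dini_aux hC0 hd0 hgCont e
    intro u h0 h1 hnr
    obtain ⟨z, hz1, hz2, hz3⟩ := hslope u h0 h1 hnr
    exact ⟨z, hz1, hz2, (le_abs_self _).trans hz3⟩
  have hle : (fun t => -(g t)) d - (fun t => -(g t)) 0 ≤ C * (d - 0) := by
    apply dini_aux hC0 hd0 hgCont.neg e
    intro u h0 h1 hnr
    obtain ⟨z, hz1, hz2, hz3⟩ := hslope u h0 h1 hnr
    refine ⟨z, hz1, hz2, ?_⟩
    have : -(g z) - -(g u) = -(g z - g u) := by ring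
    rw [Pi.neg_apply, Pi.neg_apply, this]
    exact (neg_le_abs _).trans hz3
  simp only at hle
  have hx : g 0 = E x := by rw [hgdef]; simp [hγ0]
  have hy : g d = E y := by rw [hgdef]; simp [hγd]
  have habs : |E y - E x| ≤ C * d := by
    rw [← hx, ← hy]
    rw [abs_sub_le_iff]
    constructor
    · linarith
    · linarith
  have hgoal : dist (E x) (E y) ≤ C * d := by
    rw [Real.dist_eq, abs_sub_comm]
    exact habs
  refine le_trans hgoal (le_of_eq ?_)
  rw [hCdef, hddef]
  push_cast
  ring
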